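/- arXiv:math/0211260 — 5 statements merged into one kernel-verified Lean document; each statement's English description precedes it below -/
import Mathlib

section
/- For every n ≥ 2, the number of occurrences of the subsequence 1-2 (a 1 occurring before a 2, not necessarily adjacent) in C_n equals 2·4^{n-2} + (n-2)·2^{n-2}, and the same formula holds for D_n. -/
/-- The pair `(C_n, D_n)` of sigma-words, with `C_0 = D_0 = []`,
`C_{k+1} = C_k · 1 · D_k`, `D_{k+1} = C_k · 2 · D_k`
(so `C_1 = [1]`, `D_1 = [2]`). -/
def sigmaCD : ℕ → List ℕ × List ℕ
  | 0 => ([], [])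
  | k + 1 => ((sigmaCD k).1 ++ 1 :: (sigmaCD k).2, (sigmaCD k).1 ++ 2 :: (sigmaCD k).2)

/-- The sigma-word `C_n`. -/
def sigmaC (n : ℕ) : List ℕ := (sigmaCD n).1

/-- The sigma-word `D_n`. -/
def sigmaD (n : ℕ) : List ℕ := (sigmaCD n).2

/-- Number of occurrences of `p` as a (not necessarily contiguous) subsequence of `w`,
counted with multiplicity of position sets. -/
def subseqCount (p w : List ℕ) : ℕ := (w.sublistsLen p.length).count p

/-- Number of occurrences of `p` as a factor (contiguous subword) of `w`,
i.e. the number of starting positions at which `p` occurs in `w`. -/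
def factorCount (p w : List ℕ) : ℕ :=
  (List.range w.length).countP fun i => decide ((w.drop i).take p.length = p)

lemma count_map_cons (a : ℕ) (s : List ℕ) (L : List (List ℕ)) :
    (L.map (List.cons a)).count (a :: s) = L.count s := by
  induction L with
  | nil => rfl
  | cons l L ih => simp [List.count_cons, ih]

lemma count_map_singleton (a : ℕ) (l : List ℕ) :
    (l.map (fun x => [x])).count [a] = l.count a := by
  induction l with
  | nil => rfl
  | cons x l ih => simp [List.count_cons, ih]

lemma subseqCount12_cons (a : ℕ) (t : List ℕ) :
    subseqCount [1,2] (a :: t) =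
      subseqCount [1,2] t + if a = 1 then t.count 2 else 0 := by
  unfold subseqCount
  simp only [List.length_cons, List.length_nil, List.sublistsLen_succ_cons, List.count_append]
  congr 1
  by_cases h : a = 1
  · subst h
    rw [if_pos rfl, show ([1,2] : List ℕ) = 1 :: [2] from rfl, count_map_cons,
      List.sublistsLen_one, count_map_singleton, List.count_reverse]
  · rw [if_neg h, List.count_eq_zero]
    intro hm
    obtain ⟨l, _, hl⟩ := List.mem_map.1 hm
    have h1 : (1:ℕ) = a := by simpa using congrArg (List.headI) hl.symm
    exact h h1.symm

lemma subseqCount12_append (u v : List ℕ) :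
    subseqCount [1,2] (u ++ v) =
      subseqCount [1,2] u + subseqCount [1,2] v + u.count 1 * v.count 2 := by
  induction u with
  | nil => simp [subseqCount]
  | cons a t ih =>
    rw [List.cons_append, subseqCount12_cons, subseqCount12_cons, ih, List.count_append,
      List.count_cons]
    by_cases h : a = 1 <;> simp [h] <;> ring

lemma sigmaC_succ (k : ℕ) : sigmaC (k+1) = sigmaC k ++ 1 :: sigmaD k := rfl
lemma sigmaD_succ (k : ℕ) : sigmaD (k+1) = sigmaC k ++ 2 :: sigmaD k := rfl

lemma sigma_counts : ∀ k, (sigmaC (k+1)).count 1 = 2^k ∧ (sigmaD (k+1)).count 1 + 1 = 2^k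
    ∧ (sigmaC (k+1)).count 2 + 1 = 2^k ∧ (sigmaD (k+1)).count 2 = 2^k := by
  intro k
  induction k with
  | zero => decide
  | succ k ih =>
    obtain ⟨h1, h2, h3, h4⟩ := ih
    rw [sigmaC_succ (k+1), sigmaD_succ (k+1)]
    simp only [List.count_append, List.count_cons]
    norm_num
    omega

lemma sigma_main : ∀ k, subseqCount [1,2] (sigmaC (k+2)) = 2 * 4^k + k * 2^k
    ∧ subseqCount [1,2] (sigmaD (k+2)) = 2 * 4^k + k * 2^k := by
  intro k
  induction k with
  | zero => decide
  | succ k ih =>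
    obtain ⟨hC, hD⟩ := ih
    obtain ⟨c1, -, -, d2⟩ := sigma_counts (k+1)
    constructor
    · rw [sigmaC_succ (k+2), subseqCount12_append, subseqCount12_cons, if_pos rfl,
        List.count_cons, hC, hD, c1, d2]
      have h4 : (4:ℕ)^k = 2^(k*2) := by
        rw [show (4:ℕ)=2^2 from rfl, ← pow_mul, mul_comm]
      norm_num [pow_succ]
      rw [h4]
      ring
    · rw [sigmaD_succ (k+2), subseqCount12_append, subseqCount12_cons,
        List.count_cons, hC, hD, c1, d2]
      have h4 : (4:ℕ)^k = 2^(k*2) := by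
        rw [show (4:ℕ)=2^2 from rfl, ← pow_mul, mul_comm]
      norm_num [pow_succ]
      rw [h4]
      ring

theorem subseq_12 (n : ℕ) (hn : 2 ≤ n) :
    subseqCount [1, 2] (sigmaC n) = 2 * 4 ^ (n - 2) + (n - 2) * 2 ^ (n - 2) ∧
    subseqCount [1, 2] (sigmaD n) = 2 * 4 ^ (n - 2) + (n - 2) * 2 ^ (n - 2) := by
  obtain ⟨k, rfl⟩ := Nat.exists_eq_add_of_le hn
  simpa [Nat.add_sub_cancel_left, Nat.add_comm] using sigma_main k
end

section
/- For every n ≥ 2, the number of rises in C_n (indices i with w(i) < w(i+1)) equals 2^{n-2}, and the same holds for D_n. -/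
/-- The number of rises of `w`: indices `i` with `w(i) < w(i+1)`. -/
def riseCount (w : List ℕ) : ℕ :=
  (List.range (w.length - 1)).countP fun i => decide (w.getD i 0 < w.getD (i + 1) 0)

lemma riseCount_nil : riseCount [] = 0 := rfl
lemma riseCount_singleton (a : ℕ) : riseCount [a] = 0 := rfl

lemma riseCount_cons_cons (a b : ℕ) (t : List ℕ) :
    riseCount (a :: b :: t) = (if a < b then 1 else 0) + riseCount (b :: t) := by
  unfold riseCount
  simp only [List.length_cons, Nat.add_sub_cancel, List.range_succ_eq_map,
    List.countP_cons, List.countP_map, Function.comp_def, List.getD_cons_succ,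
    List.getD_cons_zero]
  by_cases h : a < b <;> simp [h, Nat.add_comm]

lemma riseCount_append_cons (u : List ℕ) (b : ℕ) (v : List ℕ) :
    riseCount (u ++ b :: v) = riseCount (u ++ [b]) + riseCount (b :: v) := by
  induction u with
  | nil => simp [riseCount_singleton]
  | cons a u ih =>
    cases u with
    | nil => simp [riseCount_cons_cons, riseCount_singleton]
    | cons c u =>
      simp only [List.cons_append] at *
      rw [riseCount_cons_cons, riseCount_cons_cons, ih]
      omega

lemma riseCount_append_singleton (u : List ℕ) (x : ℕ) :
    riseCount (u ++ [x]) =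
      riseCount u + (match u.getLast? with | some a => if a < x then 1 else 0 | none => 0) := by
  induction u with
  | nil => simp [riseCount_singleton, riseCount_nil]
  | cons a u ih =>
    cases u with
    | nil => simp [riseCount_cons_cons, riseCount_singleton, riseCount_nil]
    | cons c u =>
      simp only [List.cons_append] at *
      rw [riseCount_cons_cons, riseCount_cons_cons, ih, List.getLast?_cons_cons]
      omega

lemma key (k : ℕ) (hk : 2 ≤ k) :
    (sigmaC k).head? = some 1 ∧ (sigmaD k).head? = some 1 ∧
    (sigmaC k).getLast? = some 2 ∧ (sigmaD k).getLast? = some 2 ∧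
    riseCount (sigmaC k) = 2 ^ (k - 2) ∧ riseCount (sigmaD k) = 2 ^ (k - 2) := by
  induction k, hk using Nat.le_induction with
  | base => refine ⟨rfl, rfl, ?_, ?_, rfl, rfl⟩ <;> decide
  | succ n hn ih =>
    obtain ⟨hc1, hd1, hc2, hd2, hrc, hrd⟩ := ih
    have hC : sigmaC (n + 1) = sigmaC n ++ 1 :: sigmaD n := rfl
    have hDn : sigmaD (n + 1) = sigmaC n ++ 2 :: sigmaD n := rfl
    obtain ⟨d, dt, hD⟩ : ∃ d dt, sigmaD n = d :: dt := by
      cases h : sigmaD n with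
      | nil => rw [h] at hd1; simp at hd1
      | cons d dt => exact ⟨d, dt, rfl⟩
    have hdhead : d = 1 := by rw [hD] at hd1; simpa using hd1
    rw [hdhead] at hD
    have hrise : ∀ x : ℕ, 1 ≤ x → x ≤ 2 → riseCount (sigmaC n ++ x :: sigmaD n)
        = riseCount (sigmaC n) + riseCount (sigmaD n) := by
      intro x hx1 hx2
      rw [riseCount_append_cons, riseCount_append_singleton, hc2, hD,
        riseCount_cons_cons]
      have h1 : ¬ (2 < x) := by omega
      have h2 : ¬ (x < 1) := by omega
      simp [h1, h2, ← hD]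
    have hexp : n + 1 - 2 = (n - 2) + 1 := by omega
    refine ⟨?_, ?_, ?_, ?_, ?_, ?_⟩
    · rw [hC, List.head?_append, hc1]; rfl
    · rw [hDn, List.head?_append, hc1]; rfl
    · rw [hC, List.getLast?_append_cons, hD, List.getLast?_cons_cons, ← hD, hd2]
    · rw [hDn, List.getLast?_append_cons, hD, List.getLast?_cons_cons, ← hD, hd2]
    · rw [hC, hrise 1 le_rfl (by norm_num), hrc, hrd, hexp, pow_succ]; ring
    · rw [hDn, hrise 2 (by norm_num) le_rfl, hrc, hrd, hexp, pow_succ]; ring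

theorem rises_sigma (n : ℕ) (hn : 2 ≤ n) :
    riseCount (sigmaC n) = 2 ^ (n - 2) ∧ riseCount (sigmaD n) = 2 ^ (n - 2) := by
  obtain ⟨-, -, -, -, h1, h2⟩ := key n hn
  exact ⟨h1, h2⟩
end

section
/- For every n ≥ 4, both C_n and D_n contain exactly 3·2^{n-4} - 1 occurrences of the factor (contiguous subword) 221. -/
/-- Recursive factor counter. -/
def fc (p : List ℕ) : List ℕ → ℕ
  | [] => 0
  | x :: w => (if (x :: w).take p.length = p then 1 else 0) + fc p w

lemma factorCount_eq_fc (p w : List ℕ) : factorCount p w = fc p w := by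
  unfold factorCount
  induction w with
  | nil => simp [fc]
  | cons x t ih =>
    rw [List.length_cons, List.range_succ_eq_map, List.countP_cons, List.countP_map]
    have h : ((fun i => decide (List.take p.length (List.drop i (x :: t)) = p)) ∘ Nat.succ)
        = fun i => decide (List.take p.length (List.drop i t) = p) := by
      funext i; simp
    rw [h, ih]
    simp [fc, Nat.add_comm]

lemma fc_short (p w : List ℕ) (h : w.length < p.length) : fc p w = 0 := by
  induction w with
  | nil => simp [fc]
  | cons x t ih =>
    simp only [fc]
    rw [ih (by simp at h ⊢; omega), if_neg, zero_add]
    intro hc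
    have := congrArg List.length hc
    simp at this h
    omega

lemma fc_append (p : List ℕ) (hp : p.length = 3) (w v : List ℕ) (a b : ℕ) :
    fc p ((w ++ [a, b]) ++ v) = fc p (w ++ [a, b]) + fc p v + fc p ([a, b] ++ v.take 2) := by
  induction w with
  | nil =>
    have h2 : fc p (v.take 2) = 0 := fc_short _ _ (by simp [hp])
    have h1 : fc p [b] = 0 := fc_short _ _ (by simp [hp])
    have h0 : fc p [a, b] = 0 := fc_short _ _ (by simp [hp])
    simp only [List.nil_append, List.cons_append, List.singleton_append, List.append_eq,
      fc, hp, h2, h1, h0]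
    have e1 : (a :: b :: v).take 3 = (a :: b :: v.take 2).take 3 := by
      simp [List.take_take]
    have e2 : (b :: v).take 3 = (b :: v.take 2).take 3 := by
      simp [List.take_take]
    rw [e1, e2]
    have i0 : List.take 3 [a, b] ≠ p := by
      intro h; have := congrArg List.length h; simp [hp] at this
    have i1 : List.take 3 [b] ≠ p := by
      intro h; have := congrArg List.length h; simp [hp] at this
    omega
  | cons x t ih =>
    simp only [List.cons_append, List.singleton_append, List.nil_append, List.append_eq,
      fc, hp] at ih ⊢
    have hlen : 3 ≤ (x :: (t ++ [a, b])).length := by simp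
    have key : ((x :: (t ++ [a, b])) ++ v).take 3 = (x :: (t ++ [a, b])).take 3 :=
      List.take_append_of_le_length hlen
    simp only [List.cons_append] at key
    rw [key]
    omega

lemma sigma_main_s10 (m : ℕ) :
    fc [2, 2, 1] (sigmaC (m + 4)) = 3 * 2 ^ m - 1 ∧
    fc [2, 2, 1] (sigmaD (m + 4)) = 3 * 2 ^ m - 1 ∧
    (sigmaC (m + 4)).take 2 = [1, 1] ∧ (sigmaD (m + 4)).take 2 = [1, 1] ∧
    (∃ w, sigmaC (m + 4) = w ++ [2, 2]) ∧ (∃ w, sigmaD (m + 4) = w ++ [2, 2]) := by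
  induction m with
  | zero =>
    have hC : sigmaC 4 = [1,1,2,1,1,2,2,1,1,1,2,2,1,2,2] := by rfl
    have hD : sigmaD 4 = [1,1,2,1,1,2,2,2,1,1,2,2,1,2,2] := by rfl
    rw [hC, hD]
    refine ⟨by decide, by decide, by decide, by decide,
      ⟨[1,1,2,1,1,2,2,1,1,1,2,2,1], by decide⟩, ⟨[1,1,2,1,1,2,2,2,1,1,2,2,1], by decide⟩⟩
  | succ m ih =>
    obtain ⟨cC, cD, tC, tD, ⟨wc, hwc⟩, ⟨wd, hwd⟩⟩ := ih
    set C := sigmaC (m + 4) with hCdef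
    set D := sigmaD (m + 4) with hDdef
    have eC : sigmaC (m + 5) = C ++ 1 :: D := rfl
    have eD : sigmaD (m + 5) = C ++ 2 :: D := rfl
    have hClen : 2 ≤ C.length := by
      have := congrArg List.length tC
      simp at this
      omega
    have hD1 : D.take 1 = [1] := by
      have h : D.take 1 = (D.take 2).take 1 := by rw [List.take_take]; norm_num
      rw [h, tD]; rfl
    -- counts
    have hfD1 : fc [2, 2, 1] (1 :: D) = fc [2, 2, 1] D := by
      have ht : (1 :: D).take ([2, 2, 1] : List ℕ).length = [1, 1, 1] := by
        simp [tD]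
      simp only [fc, ht]
      rw [if_neg (by decide), zero_add]
    have hfD2 : fc [2, 2, 1] (2 :: D) = fc [2, 2, 1] D := by
      have ht : (2 :: D).take ([2, 2, 1] : List ℕ).length = [2, 1, 1] := by
        simp [tD]
      simp only [fc, ht]
      rw [if_neg (by decide), zero_add]
    have hcrossC : ([2, 2] : List ℕ) ++ (1 :: D).take 2 = [2, 2, 1, 1] := by
      have h : (1 :: D).take 2 = 1 :: D.take 1 := by simp
      rw [h, hD1]; rfl
    have hcrossD : ([2, 2] : List ℕ) ++ (2 :: D).take 2 = [2, 2, 2, 1] := by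
      have h : (2 :: D).take 2 = 2 :: D.take 1 := by simp
      rw [h, hD1]; rfl
    have hfcC : fc [2, 2, 1] (sigmaC (m + 5)) = fc [2, 2, 1] C + fc [2, 2, 1] D + 1 := by
      rw [eC, hwc, fc_append [2,2,1] rfl, hcrossC, ← hwc, hfD1]
      have h1 : fc [2, 2, 1] [2, 2, 1, 1] = 1 := by decide
      rw [h1]
    have hfcD : fc [2, 2, 1] (sigmaD (m + 5)) = fc [2, 2, 1] C + fc [2, 2, 1] D + 1 := by
      rw [eD, hwc, fc_append [2,2,1] rfl, hcrossD, ← hwc, hfD2]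
      have h1 : fc [2, 2, 1] [2, 2, 2, 1] = 1 := by decide
      rw [h1]
    have hval : fc [2, 2, 1] C + fc [2, 2, 1] D + 1 = 3 * 2 ^ (m + 1) - 1 := by
      rw [cC, cD, pow_succ]
      have h1 : 1 ≤ 2 ^ m := Nat.one_le_two_pow
      generalize 2 ^ m = K at *
      omega
    refine ⟨by rw [hfcC, hval], by rw [hfcD, hval], ?_, ?_, ?_, ?_⟩
    · rw [eC, List.take_append_of_le_length hClen, tC]
    · rw [eD, List.take_append_of_le_length hClen, tC]
    · exact ⟨C ++ 1 :: wd, by rw [eC, hwd]; simp⟩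
    · exact ⟨C ++ 2 :: wd, by rw [eD, hwd]; simp⟩

theorem factor_221 (n : ℕ) (hn : 4 ≤ n) :
    factorCount [2, 2, 1] (sigmaC n) = 3 * 2 ^ (n - 4) - 1 ∧
    factorCount [2, 2, 1] (sigmaD n) = 3 * 2 ^ (n - 4) - 1 := by
  obtain ⟨m, rfl⟩ := Nat.exists_eq_add_of_le hn
  rw [factorCount_eq_fc, factorCount_eq_fc]
  have h := sigma_main_s10 m
  rw [show 4 + m = m + 4 by omega, show m + 4 - 4 = m by omega]
  exact ⟨h.1, h.2.1⟩
end

section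
/- For every n ≥ 4, the number of occurrences of the pattern 12-21 in C_n and in D_n both equal (1/2)·4^{n-2} - 3·2^{n-4}. -/
/-- Number of occurrences of the generalized pattern `12-21` in `w`:
pairs of indices `i < j` with `i + 2 ≤ j`, `w(i)w(i+1) = 12` and `w(j)w(j+1) = 21`. -/
def count1221 (w : List ℕ) : ℕ :=
  ((Finset.range w.length ×ˢ Finset.range w.length).filter fun q =>
    q.1 + 2 ≤ q.2 ∧ w.getD q.1 0 = 1 ∧ w.getD (q.1 + 1) 0 = 2 ∧
      w.getD q.2 0 = 2 ∧ w.getD (q.2 + 1) 0 = 1).card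

-- state: (b0, b1, f, head)
def pStep (x : ℕ) (st : ℕ × ℕ × ℕ × ℕ) : ℕ × ℕ × ℕ × ℕ :=
  (st.1 + (if x = 2 ∧ st.2.2.2 = 1 then 1 else 0),
   st.1,
   st.2.2.1 + (if x = 1 ∧ st.2.2.2 = 2 then st.2.1 else 0),
   x)

def pB0 (w : List ℕ) : ℕ :=
  ∑ j ∈ Finset.range w.length, (if w.getD j 0 = 2 ∧ w.getD (j+1) 0 = 1 then 1 else 0)

def pB1 (w : List ℕ) : ℕ :=
  ∑ j ∈ Finset.range w.length, (if 1 ≤ j ∧ w.getD j 0 = 2 ∧ w.getD (j+1) 0 = 1 then 1 else 0)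

lemma count1221_eq_sum (w : List ℕ) : count1221 w =
    ∑ i ∈ Finset.range w.length, ∑ j ∈ Finset.range w.length,
      (if i + 2 ≤ j ∧ w.getD i 0 = 1 ∧ w.getD (i+1) 0 = 2 ∧
        w.getD j 0 = 2 ∧ w.getD (j+1) 0 = 1 then 1 else 0) := by
  rw [count1221, Finset.card_filter, Finset.sum_product]

lemma getD_cons_succ (x : ℕ) (s : List ℕ) (k : ℕ) : (x :: s).getD (k+1) 0 = s.getD k 0 := rfl

lemma getD_cons_zero (x : ℕ) (s : List ℕ) : (x :: s).getD 0 0 = x := rfl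

lemma pB0_cons (x : ℕ) (s : List ℕ) :
    pB0 (x :: s) = pB0 s + (if x = 2 ∧ s.getD 0 0 = 1 then 1 else 0) := by
  rw [pB0, List.length_cons, Finset.sum_range_succ']
  simp only [getD_cons_succ, getD_cons_zero]
  rfl

lemma pB1_cons (x : ℕ) (s : List ℕ) : pB1 (x :: s) = pB0 s := by
  rw [pB1, List.length_cons, Finset.sum_range_succ']
  simp only [getD_cons_succ, getD_cons_zero, pB0]
  simp

lemma count1221_cons (x : ℕ) (s : List ℕ) :
    count1221 (x :: s) = count1221 s + (if x = 1 ∧ s.getD 0 0 = 2 then pB1 s else 0) := by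
  rw [count1221_eq_sum, count1221_eq_sum, List.length_cons, Finset.sum_range_succ']
  have h1 : ∀ i : ℕ, (∑ j ∈ Finset.range (s.length + 1),
      (if (i+1) + 2 ≤ j ∧ (x :: s).getD (i+1) 0 = 1 ∧ (x :: s).getD (i+1+1) 0 = 2 ∧
        (x :: s).getD j 0 = 2 ∧ (x :: s).getD (j+1) 0 = 1 then 1 else 0)) =
      ∑ j ∈ Finset.range s.length,
      (if i + 2 ≤ j ∧ s.getD i 0 = 1 ∧ s.getD (i+1) 0 = 2 ∧
        s.getD j 0 = 2 ∧ s.getD (j+1) 0 = 1 then 1 else 0) := by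
    intro i
    rw [Finset.sum_range_succ']
    simp only [getD_cons_succ, getD_cons_zero]
    have : ∀ j, ((i+1) + 2 ≤ j + 1) = (i + 2 ≤ j) := by intro j; rw [eq_iff_iff]; omega
    simp only [this]
    simp
  simp only [h1]
  have h0 : (∑ j ∈ Finset.range (s.length + 1),
      (if 0 + 2 ≤ j ∧ (x :: s).getD 0 0 = 1 ∧ (x :: s).getD (0+1) 0 = 2 ∧
        (x :: s).getD j 0 = 2 ∧ (x :: s).getD (j+1) 0 = 1 then 1 else 0)) =
      (if x = 1 ∧ s.getD 0 0 = 2 then pB1 s else 0) := by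
    rw [Finset.sum_range_succ']
    simp only [getD_cons_succ, getD_cons_zero]
    by_cases hx : x = 1 ∧ s.getD 0 0 = 2
    · simp only [hx.1, hx.2, if_pos hx, pB1]
      simp only [show ∀ j:ℕ, (0 + 2 ≤ j + 1) = (1 ≤ j) from fun j => by rw [eq_iff_iff]; omega]
      simp
    · rw [if_neg hx]
      have : ∀ j ∈ Finset.range s.length, (if 0 + 2 ≤ j + 1 ∧ x = 1 ∧ s.getD 0 0 = 2 ∧
          s.getD j 0 = 2 ∧ s.getD (j+1) 0 = 1 then (1:ℕ) else 0) = 0 := by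
        intro j _; rw [if_neg]; tauto
      erw [Finset.sum_congr rfl this]
      simp
  rw [h0]

lemma foldr_pStep (w : List ℕ) :
    w.foldr pStep (0, 0, 0, 0) = (pB0 w, pB1 w, count1221 w, w.getD 0 0) := by
  induction w with
  | nil => simp [pB0, pB1, count1221]
  | cons x s ih =>
    rw [List.foldr_cons, ih, pStep, pB0_cons, pB1_cons, count1221_cons]
    simp only [getD_cons_zero]

def pE (h : ℕ) : ℕ := if h = 1 then 1 else 0

def pBv : ℕ → ℕ
  | 0 => 1
  | n+1 => 2 * pBv n + 1

def pFCD : ℕ → ℕ × ℕ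
  | 0 => (0, 1)
  | n+1 => ((pFCD n).1 + (pFCD n).2 + 4^(n+1), (pFCD n).1 + (pFCD n).2 + 4^(n+1))

lemma pBv_add_one (n : ℕ) : pBv n + 1 = 2^(n+1) := by
  induction n with
  | zero => rfl
  | succ n ih => rw [pBv, pow_succ]; omega

lemma key_s12 (n : ℕ) : ∀ b0 b1 f h : ℕ,
    (sigmaC (n+3)).foldr pStep (b0, b1, f, h) =
      (b0 + pBv n + pE h, b0 + pBv n + pE h, f + 2^(n+1) * (b0 + pE h) + (pFCD n).1, 1) ∧
    (sigmaD (n+3)).foldr pStep (b0, b1, f, h) =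
      (b0 + pBv n + pE h, b0 + pBv n + pE h, f + 2^(n+1) * (b0 + pE h) + (pFCD n).2, 1) := by
  induction n with
  | zero =>
    intro b0 b1 f h
    have hc : sigmaC 3 = [1,1,2,1,1,2,2] := rfl
    have hd : sigmaD 3 = [1,1,2,2,1,2,2] := rfl
    rw [hc, hd]
    simp only [List.foldr_cons, List.foldr_nil, pStep, pE, pBv, pFCD]
    norm_num
    by_cases h1 : h = 1 <;> simp [h1, Prod.ext_iff] <;> omega
  | succ n ih =>
    intro b0 b1 f h
    have hc : sigmaC (n+1+3) = sigmaC (n+3) ++ 1 :: sigmaD (n+3) := rfl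
    have hd : sigmaD (n+1+3) = sigmaC (n+3) ++ 2 :: sigmaD (n+3) := rfl
    have expand : ∀ c : ℕ, 2^(n+1) * (c + pBv n + pE h + 1) =
        2^(n+1) * (c + pE h) + 4^(n+1) := by
      intro c
      rw [show c + pBv n + pE h + 1 = (c + pE h) + (pBv n + 1) by omega, mul_add,
        pBv_add_one, ← mul_pow]
      norm_num
    constructor
    · rw [hc, List.foldr_append, List.foldr_cons, (ih b0 b1 f h).2]
      have hstep : pStep 1 (b0 + pBv n + pE h, b0 + pBv n + pE h,
          f + 2^(n+1) * (b0 + pE h) + (pFCD n).2, 1) =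
          (b0 + pBv n + pE h, b0 + pBv n + pE h,
          f + 2^(n+1) * (b0 + pE h) + (pFCD n).2, 1) := by
        simp [pStep]
      rw [hstep, (ih _ _ _ 1).1]
      have hE1 : pE 1 = 1 := rfl
      rw [hE1, expand b0]
      simp only [pBv, pFCD, Prod.mk.injEq]
      refine ⟨by ring, by ring, by ring, trivial⟩
    · rw [hd, List.foldr_append, List.foldr_cons, (ih b0 b1 f h).2]
      have hstep : pStep 2 (b0 + pBv n + pE h, b0 + pBv n + pE h,
          f + 2^(n+1) * (b0 + pE h) + (pFCD n).2, 1) =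
          (b0 + pBv n + pE h + 1, b0 + pBv n + pE h,
          f + 2^(n+1) * (b0 + pE h) + (pFCD n).2, 2) := by
        simp [pStep]
      rw [hstep, (ih _ _ _ 2).1]
      have hE2 : pE 2 = 0 := rfl
      rw [hE2, add_zero, expand b0]
      simp only [pBv, pFCD, Prod.mk.injEq]
      refine ⟨by ring, by ring, by ring, trivial⟩

lemma count_eq (m : ℕ) : count1221 (sigmaC (m+3)) = (pFCD m).1 ∧
    count1221 (sigmaD (m+3)) = (pFCD m).2 := by
  have h := key_s12 m 0 0 0 0
  have hE0 : pE 0 = 0 := rfl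
  rw [foldr_pStep, foldr_pStep, hE0] at h
  constructor
  · have := congrArg (fun p : ℕ × ℕ × ℕ × ℕ => p.2.2.1) h.1
    simpa using this
  · have := congrArg (fun p : ℕ × ℕ × ℕ × ℕ => p.2.2.1) h.2
    simpa using this

lemma pFCD_val (m : ℕ) : ((pFCD (m+1)).1 : ℚ) = (1/2) * 4^(m+2) - 3 * 2^m ∧
    ((pFCD (m+1)).2 : ℚ) = (1/2) * 4^(m+2) - 3 * 2^m := by
  induction m with
  | zero => norm_num [pFCD]
  | succ m ih =>
    have h1 : (pFCD (m+2)).1 = (pFCD (m+1)).1 + (pFCD (m+1)).2 + 4^(m+2) := rfl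
    have h2 : (pFCD (m+2)).2 = (pFCD (m+1)).1 + (pFCD (m+1)).2 + 4^(m+2) := rfl
    rw [h1, h2]
    push_cast
    rw [ih.1, ih.2]
    constructor <;> ring

theorem pattern_12_21 (n : ℕ) (hn : 4 ≤ n) :
    (count1221 (sigmaC n) : ℚ) = (1 / 2) * 4 ^ (n - 2) - 3 * 2 ^ (n - 4) ∧
    (count1221 (sigmaD n) : ℚ) = (1 / 2) * 4 ^ (n - 2) - 3 * 2 ^ (n - 4) := by
  obtain ⟨m, rfl⟩ : ∃ m, n = m + 4 := ⟨n - 4, by omega⟩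
  have h2 : m + 4 - 2 = m + 2 := by omega
  have h4 : m + 4 - 4 = m := by omega
  rw [h2, h4]
  have hc := (count_eq (m+1)).1
  have hd := (count_eq (m+1)).2
  have hv := pFCD_val m
  constructor
  · rw [show m + 4 = m + 1 + 3 by omega, hc, hv.1]
  · rw [show m + 4 = m + 1 + 3 by omega, hd, hv.2]
end

section
/- The n-th letter of the sigma-sequence w_σ (for n ≥ 1) equals σ where n = 2^t(4s + σ') with σ' ∈ {1, 3}, t the largest power of 2 dividing n, and σ = 1 if σ' = 1, σ = 2 if σ' = 3. That is, the letter at position n of lim C_k is 1 if (n / 2^{v_2(n)}) ≡ 1 (mod 4) and 2 if it is ≡ 3 (mod 4). -/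
lemma val_pow_mul (K m : ℕ) (hm : ¬ 2 ∣ m) :
    padicValNat 2 (2 ^ K * m) = K := by
  have hm0 : m ≠ 0 := by rintro rfl; exact hm ⟨0, rfl⟩
  have : Fact (Nat.Prime 2) := ⟨Nat.prime_two⟩
  rw [padicValNat.mul (pow_ne_zero _ two_ne_zero) hm0, padicValNat.prime_pow,
    padicValNat.eq_zero_of_not_dvd hm, add_zero]

def fσ (n : ℕ) : ℕ := if n / 2 ^ (padicValNat 2 n) % 4 = 1 then 1 else 2

lemma fσ_pow_mul (K m : ℕ) (hm : ¬ 2 ∣ m) : fσ (2 ^ K * m) = if m % 4 = 1 then 1 else 2 := by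
  rw [fσ, val_pow_mul K m hm, Nat.mul_div_cancel_left _ (pow_pos two_pos K)]

lemma decomp (n : ℕ) (hn : 0 < n) :
    ∃ m, ¬ 2 ∣ m ∧ n = 2 ^ (padicValNat 2 n) * m := by
  have : Fact (Nat.Prime 2) := ⟨Nat.prime_two⟩
  refine ⟨n / 2 ^ (padicValNat 2 n), ?_, ?_⟩
  · have := Nat.not_dvd_ordCompl Nat.prime_two hn.ne'
    rwa [Nat.factorization_def n Nat.prime_two] at this
  · have := Nat.ordProj_mul_ordCompl_eq_self n 2
    rw [Nat.factorization_def n Nat.prime_two] at this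
    exact this.symm

lemma fσ_add (K n : ℕ) (hn : 1 ≤ n) (hK : padicValNat 2 n + 2 ≤ K) :
    fσ (2 ^ K + n) = fσ n := by
  obtain ⟨m, hm, hdec⟩ := decomp n hn
  set v := padicValNat 2 n with hv
  have hKv : v + (K - v) = K := by omega
  have h2 : 2 ^ K + n = 2 ^ v * (2 ^ (K - v) + m) := by
    rw [Nat.mul_add, ← pow_add, hKv, ← hdec]
  have hodd : ¬ 2 ∣ (2 ^ (K - v) + m) := by
    intro h
    have : (2:ℕ) ∣ 2 ^ (K - v) := dvd_pow_self 2 (by omega)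
    exact hm ((Nat.dvd_add_right this).mp h)
  rw [h2, fσ_pow_mul _ _ hodd, hdec, fσ_pow_mul _ _ hm]
  have h4 : (4:ℕ) ∣ 2 ^ (K - v) := by
    have : (2:ℕ)^2 ∣ 2 ^ (K - v) := pow_dvd_pow 2 (by omega)
    simpa using this
  obtain ⟨c, hc⟩ := h4
  have heq : (2 ^ (K - v) + m) % 4 = m % 4 := by omega
  rw [heq]

lemma val_lt_of_lt_pow {n K : ℕ} (hn : 1 ≤ n) (hK : n < 2 ^ K) : padicValNat 2 n < K := by
  obtain ⟨m, hm, hdec⟩ := decomp n hn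
  have hm1 : 1 ≤ m := by rcases Nat.eq_zero_or_pos m with h | h; · omega
                         · exact h
  by_contra h
  have : 2 ^ K ≤ 2 ^ padicValNat 2 n := Nat.pow_le_pow_right two_pos (by omega)
  nlinarith [Nat.one_le_two_pow (n := padicValNat 2 n)]

lemma lenC (k : ℕ) : (sigmaCD k).1.length = 2 ^ k - 1 ∧ (sigmaCD k).2.length = 2 ^ k - 1 := by
  induction k with
  | zero => simp [sigmaCD]
  | succ k ih =>
    have h1 : (1:ℕ) ≤ 2 ^ k := Nat.one_le_two_pow
    simp [sigmaCD, ih.1, ih.2, pow_succ]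
    omega

lemma key_s18 (k : ℕ) : ∀ n, 1 ≤ n → n ≤ 2 ^ k - 1 →
    (sigmaCD k).1.getD (n-1) 0 = fσ n ∧ (sigmaCD k).2.getD (n-1) 0 = fσ (2 ^ k + n) := by
  induction k with
  | zero => intro n h1 h2; omega
  | succ k ih =>
    intro n h1 h2
    have hp1 : (1:ℕ) ≤ 2 ^ k := Nat.one_le_two_pow
    have hlc : (sigmaCD k).1.length = 2 ^ k - 1 := (lenC k).1
    have hps : (2:ℕ) ^ (k+1) = 2 ^ k + 2 ^ k := by rw [pow_succ]; ring
    show ((sigmaCD k).1 ++ 1 :: (sigmaCD k).2).getD (n-1) 0 = fσ n ∧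
         ((sigmaCD k).1 ++ 2 :: (sigmaCD k).2).getD (n-1) 0 = fσ (2 ^ (k+1) + n)
    rcases lt_trichotomy n (2 ^ k) with h | h | h
    · -- n ≤ 2^k - 1 : in C_k part
      have hlt : n - 1 < (sigmaCD k).1.length := by omega
      rw [List.getD_append _ _ _ _ hlt, List.getD_append _ _ _ _ hlt]
      have hCk := ih n h1 (by omega)
      refine ⟨hCk.1, ?_⟩
      rw [hCk.1]
      have hv : padicValNat 2 n < k := val_lt_of_lt_pow h1 h
      exact (fσ_add (k+1) n h1 (by omega)).symm
    · -- n = 2^k : middle letter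
      subst h
      have hge : (sigmaCD k).1.length ≤ 2 ^ k - 1 := by omega
      rw [List.getD_append_right _ _ _ _ (by omega), List.getD_append_right _ _ _ _ (by omega)]
      have hidx : 2 ^ k - 1 - (sigmaCD k).1.length = 0 := by omega
      rw [hidx]
      constructor
      · show (1:ℕ) = fσ (2 ^ k)
        have : fσ (2 ^ k) = if 1 % 4 = 1 then 1 else 2 := by
          have := fσ_pow_mul k 1 (by norm_num)
          simpa using this
        simp [this]
      · show (2:ℕ) = fσ (2 ^ (k+1) + 2 ^ k)
        have h3 : 2 ^ (k+1) + 2 ^ k = 2 ^ k * 3 := by rw [pow_succ]; ring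
        rw [h3, fσ_pow_mul k 3 (by norm_num)]; norm_num
    · -- n > 2^k : in D_k part
      have hge : (sigmaCD k).1.length ≤ n - 1 := by omega
      rw [List.getD_append_right _ _ _ _ hge, List.getD_append_right _ _ _ _ hge]
      have hidx : n - 1 - (sigmaCD k).1.length = (n - 2 ^ k - 1) + 1 := by omega
      rw [hidx]
      simp only [List.getD_cons_succ]
      set m := n - 2 ^ k with hmdef
      have hm1 : 1 ≤ m := by omega
      have hm2 : m ≤ 2 ^ k - 1 := by omega
      have hDk := (ih m hm1 hm2).2
      have hn' : 2 ^ k + m = n := by omega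
      rw [hn'] at hDk
      refine ⟨hDk, ?_⟩
      rw [hDk]
      have hvn : padicValNat 2 n < k := by
        obtain ⟨c, hcd, hceq⟩ := decomp n (by omega)
        by_contra hcon
        have hk2 : 2 ^ k ∣ 2 ^ padicValNat 2 n := pow_dvd_pow 2 (by omega)
        have : 2 ^ k ∣ n := hceq ▸ hk2.mul_right c
        obtain ⟨d, hd⟩ := this
        rcases Nat.lt_or_ge d 2 with hd2 | hd2
        · interval_cases d <;> omega
        · have : 2 * 2 ^ k ≤ 2 ^ k * d := by nlinarith
          omega
      exact (fσ_add (k+1) n (by omega) (by omega)).symm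

theorem sigma_sequence_formula (n : ℕ) (hn : 1 ≤ n) (k : ℕ) (hk : n ≤ 2 ^ k - 1) :
    (sigmaC k).getD (n - 1) 0 =
      if n / 2 ^ (padicValNat 2 n) % 4 = 1 then 1 else 2 :=
  (key_s18 k n hn hk).1
end
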